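/- Let A > 0, s > 0, set η₀ = 4A/s and η_k = η₀ 2^{−k} for k ≥ 1. Let N ≥ 2 be an integer, let r_1,…,r_N be real numbers with r_k ≤ 2A η_k^{−1} for every k ∈ {1,…,N}, and let Ψ ≥ 0 satisfy A η_{N−1}^{−2} < Ψ. Then Σ_{k=1}^N r_k + s·N ≤ 16 √(A Ψ). -/

import Mathlib

open Finset

/-- **Arithmetic core of the doubling trick.**
With `η₀ = 4A/s`, `η_k = η₀ 2^{−k}`, if the per-phase regrets satisfy
`r_k ≤ 2A η_k⁻¹` for `k ∈ {1,…,N}` (with `N ≥ 2`) and the accumulated statistic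
`Ψ ≥ 0` satisfies `A η_{N−1}^{−2} < Ψ`, then `Σ_{k=1}^N r_k + s N ≤ 16 √(AΨ)`. -/
theorem stmt_12 (A s : ℝ) (hA : 0 < A) (hs : 0 < s)
    (η : ℕ → ℝ) (hη : ∀ k, η k = (4 * A / s) * (2 : ℝ) ^ (-(k : ℤ)))
    (N : ℕ) (hN : 2 ≤ N) (r : ℕ → ℝ)
    (hr : ∀ k ∈ Icc 1 N, r k ≤ 2 * A * (η k)⁻¹)
    (Ψ : ℝ) (hΨ : 0 ≤ Ψ) (hlast : A * ((η (N - 1)) ^ 2)⁻¹ < Ψ) :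
    (∑ k ∈ Icc 1 N, r k) + s * N ≤ 16 * Real.sqrt (A * Ψ) := by
  obtain ⟨m, rfl⟩ : ∃ m, N = m + 2 := ⟨N - 2, by omega⟩
  have hη' : ∀ k : ℕ, 2 * A * (η k)⁻¹ = (s / 2) * 2 ^ k := by
    intro k
    rw [hη k, zpow_neg, zpow_natCast]
    field_simp
    ring
  -- bound the sum
  have hsum : (∑ k ∈ Icc 1 (m + 2), r k) ≤ (s / 2) * (2 ^ (m + 3) - 2) := by
    calc (∑ k ∈ Icc 1 (m + 2), r k) ≤ ∑ k ∈ Icc 1 (m + 2), (s / 2) * 2 ^ k := by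
          apply Finset.sum_le_sum
          intro k hk
          rw [← hη' k]
          exact hr k hk
      _ = (s / 2) * ∑ k ∈ Icc 1 (m + 2), (2 : ℝ) ^ k := by rw [Finset.mul_sum]
      _ = (s / 2) * (2 ^ (m + 3) - 2) := by
          congr 1
          have h1 : Icc 1 (m + 2) = Ico 1 (m + 3) := by
            ext x; simp [Nat.lt_succ_iff]
          rw [h1, geom_sum_Ico (by norm_num : (2:ℝ) ≠ 1) (by omega)]
          norm_num
  have hN1 : m + 2 - 1 = m + 1 := rfl
  -- key: s * 2^(m+1) ≤ 4 * sqrt (A Ψ)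
  have hkey : s * 2 ^ (m + 1) ≤ Real.sqrt (16 * (A * Ψ)) := by
    have h := hlast
    rw [hN1, hη (m + 1), zpow_neg, zpow_natCast] at h
    have h2 : (0:ℝ) < (2:ℝ) ^ (m + 1) := by positivity
    have hAne : A ≠ 0 := ne_of_gt hA
    have hsne : s ≠ 0 := ne_of_gt hs
    rw [mul_pow, inv_pow, div_pow, mul_inv, inv_inv, inv_div] at h
    -- h : A * (s^2 / (4*A)^2 * (2^(m+1))^2) < Ψ
    have hq : (s * 2 ^ (m + 1)) ^ 2 ≤ 16 * (A * Ψ) := by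
      have heq : A * (s ^ 2 / (4 * A) ^ 2 * ((2:ℝ) ^ (m + 1)) ^ 2)
          = s ^ 2 * ((2:ℝ) ^ (m + 1)) ^ 2 / (16 * A) := by
        field_simp; ring
      rw [heq, div_lt_iff₀ (by positivity)] at h
      nlinarith [h]
    calc s * 2 ^ (m + 1) = Real.sqrt ((s * 2 ^ (m + 1)) ^ 2) :=
          (Real.sqrt_sq (by positivity)).symm
      _ ≤ Real.sqrt (16 * (A * Ψ)) := Real.sqrt_le_sqrt hq
  have hsqrt16 : Real.sqrt (16 * (A * Ψ)) = 4 * Real.sqrt (A * Ψ) := by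
    rw [show (16:ℝ) * (A * Ψ) = 4^2 * (A * Ψ) by ring, Real.sqrt_mul (by positivity),
      Real.sqrt_sq (by norm_num)]
  rw [hsqrt16] at hkey
  have hNle : ((m + 2 : ℕ) : ℝ) ≤ 2 ^ (m + 2) := by
    exact_mod_cast (Nat.lt_two_pow_self (n := m + 2)).le
  have hpow : (2:ℝ) ^ (m + 3) = 4 * 2 ^ (m + 1) := by ring
  have hpow2 : (2:ℝ) ^ (m + 2) = 2 * 2 ^ (m + 1) := by ring
  nlinarith [mul_le_mul_of_nonneg_left hNle hs.le]
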